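/- Let (a_i)_{i∈ℤ} and (b_i)_{i∈ℤ} be sequences of nonnegative integers such that: there is an integer N with a_i = 0 for all i ≥ N and b_i = 0 for all i ≤ −N; a_i → +∞ as i → −∞ and b_i → +∞ as i → +∞; a_i ≥ b_i for i < 0; and a_i ≤ b_i for i ≥ 0. Let X = Y = ⊕_{i∈ℤ} T⁺ and let D : X → Y be the F[U]-module homomorphism whose j-th coordinate of D((x_i)_i) is U^{a_j}·x_j + U^{b_{j+1}}·x_{j+1}. Then there is an isomorphism of F[U]-modules ker(D) ≅ ⊕_{i∈ℤ} τ(min(a_i, b_i)). (Kernel part of Lemma 3.9 of the paper.) -/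

import Mathlib

open Polynomial LaurentPolynomial DirectSum Filter

noncomputable section

/-- The tower `T⁺ = F[U,U⁻¹] / U·F[U]` as an `F[U]`-module. -/
abbrev Tplus (F : Type*) [Field F] :=
  LaurentPolynomial F ⧸ (Submodule.span (Polynomial F) {(T 1 : LaurentPolynomial F)})

/-- `τ(N)`: the kernel of multiplication by `U^N` on `T⁺`. -/
def tau (F : Type*) [Field F] (N : ℕ) : Submodule (Polynomial F) (Tplus F) :=
  LinearMap.ker (LinearMap.lsmul (Polynomial F) (Tplus F) ((X : Polynomial F) ^ N))

/-- Lemma 3.9, kernel part: `ker D ≅ ⊕_{i ∈ ℤ} τ(min(aᵢ, bᵢ))`. -/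
theorem stmt_4 (F : Type*) [Field F] (a b : ℤ → ℕ)
    (hvanish : ∃ N : ℤ, (∀ i, N ≤ i → a i = 0) ∧ (∀ i, i ≤ -N → b i = 0))
    (ha : Tendsto a atBot atTop) (hb : Tendsto b atTop atTop)
    (hab₁ : ∀ i : ℤ, i < 0 → b i ≤ a i) (hab₂ : ∀ i : ℤ, 0 ≤ i → a i ≤ b i)
    (D : (⨁ _i : ℤ, Tplus F) →ₗ[Polynomial F] (⨁ _i : ℤ, Tplus F))
    (hD : ∀ (x : ⨁ _i : ℤ, Tplus F) (j : ℤ),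
      D x j = (X : Polynomial F) ^ (a j) • x j + (X : Polynomial F) ^ (b (j + 1)) • x (j + 1)) :
    Nonempty ((LinearMap.ker D) ≃ₗ[Polynomial F] (⨁ i : ℤ, tau F (min (a i) (b i)))) := by
  classical
  have hkill : ∀ (k n : ℕ) (t : Tplus F), n ≤ k → (X : Polynomial F) ^ n • t = 0 →
      (X : Polynomial F) ^ k • t = 0 := by
    intro k n t h ht
    calc (X : Polynomial F) ^ k • t
        = (X : Polynomial F) ^ (k - n) • ((X : Polynomial F) ^ n • t) := by
          rw [smul_smul, ← pow_add, Nat.sub_add_cancel h]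
      _ = 0 := by rw [ht, smul_zero]
  have mem_tau : ∀ (N : ℕ) (t : Tplus F), t ∈ tau F N ↔ (X : Polynomial F) ^ N • t = 0 := by
    intro N t
    simp [tau, LinearMap.mem_ker]
  -- main structural fact: kernel elements are coordinatewise torsion
  have key : ∀ x : ⨁ _i : ℤ, Tplus F, D x = 0 → ∀ j : ℤ,
      (X : Polynomial F) ^ (a j) • x j = 0 ∧ (X : Polynomial F) ^ (b j) • x j = 0 := by
    intro x hx
    have heq : ∀ j : ℤ, (X : Polynomial F) ^ (a j) • x j
        + (X : Polynomial F) ^ (b (j + 1)) • x (j + 1) = 0 := by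
      intro j
      have h0 := DFunLike.congr_fun hx j
      rw [hD] at h0
      exact h0
    obtain ⟨M, hM⟩ : ∃ M : ℤ, ∀ k : ℤ, M ≤ k → x k = 0 := by
      obtain ⟨M, hM⟩ := (x.support.finite_toSet).bddAbove
      refine ⟨M + 1, fun k hk => DFinsupp.notMem_support_iff.mp fun hmem => ?_⟩
      have := hM (Finset.mem_coe.mpr hmem)
      omega
    obtain ⟨m, hm⟩ : ∃ m : ℤ, ∀ k : ℤ, k ≤ m → x k = 0 := by
      obtain ⟨m, hm⟩ := (x.support.finite_toSet).bddBelow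
      refine ⟨m - 1, fun k hk => DFinsupp.notMem_support_iff.mp fun hmem => ?_⟩
      have := hm (Finset.mem_coe.mpr hmem)
      omega
    have hyind : ∀ n : ℕ, ∀ j : ℤ, 0 ≤ j → M ≤ j + n →
        (X : Polynomial F) ^ (a j) • x j = 0 := by
      intro n
      induction n with
      | zero =>
        intro j _ hMj
        rw [hM j (by omega), smul_zero]
      | succ n ih =>
        intro j hj hMj
        by_cases hcase : M ≤ j
        · rw [hM j hcase, smul_zero]
        · have h1 : (X : Polynomial F) ^ (a (j + 1)) • x (j + 1) = 0 :=
            ih (j + 1) (by omega) (by omega)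
          have h2 : (X : Polynomial F) ^ (b (j + 1)) • x (j + 1) = 0 :=
            hkill _ _ _ (hab₂ (j + 1) (by omega)) h1
          have h3 := heq j
          rw [h2, add_zero] at h3
          exact h3
    have hya : ∀ j : ℤ, 0 ≤ j → (X : Polynomial F) ^ (a j) • x j = 0 := fun j hj =>
      hyind (M - j).toNat j hj (by omega)
    have hzind : ∀ n : ℕ, ∀ j : ℤ, j ≤ 0 → j - n ≤ m →
        (X : Polynomial F) ^ (b j) • x j = 0 := by
      intro n
      induction n with
      | zero =>
        intro j _ hmj
        rw [hm j (by omega), smul_zero]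
      | succ n ih =>
        intro j hj hmj
        by_cases hcase : j ≤ m
        · rw [hm j hcase, smul_zero]
        · have h1 : (X : Polynomial F) ^ (b (j - 1)) • x (j - 1) = 0 :=
            ih (j - 1) (by omega) (by omega)
          have h2 : (X : Polynomial F) ^ (a (j - 1)) • x (j - 1) = 0 :=
            hkill _ _ _ (hab₁ (j - 1) (by omega)) h1
          have h3 := heq (j - 1)
          rw [h2, zero_add] at h3
          simpa using h3
    have hzb : ∀ j : ℤ, j ≤ 0 → (X : Polynomial F) ^ (b j) • x j = 0 := fun j hj =>
      hzind (j - m).toNat j hj (by omega)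
    intro j
    rcases le_or_gt 0 j with hj | hj
    · refine ⟨hya j hj, ?_⟩
      rcases lt_or_ge 0 j with hj' | hj'
      · have h3 := heq (j - 1)
        rw [hya (j - 1) (by omega), zero_add] at h3
        simpa using h3
      · exact hzb j (by omega)
    · refine ⟨?_, hzb j (by omega)⟩
      have h3 := heq j
      rw [hzb (j + 1) (by omega), add_zero] at h3
      exact h3
  -- the inclusion map
  let Φ : (⨁ i : ℤ, tau F (min (a i) (b i))) →ₗ[Polynomial F] (⨁ _i : ℤ, Tplus F) :=
    DFinsupp.mapRange.linearMap (fun i => (tau F (min (a i) (b i))).subtype)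
  have hΦapp : ∀ (v : ⨁ i : ℤ, tau F (min (a i) (b i))) (j : ℤ),
      Φ v j = (v j : Tplus F) := by
    intro v j
    rfl
  have hΦker : ∀ v, Φ v ∈ LinearMap.ker D := by
    intro v
    rw [LinearMap.mem_ker]
    have h1 : ∀ j : ℤ, (X : Polynomial F) ^ (a j) • (Φ v) j = 0 := by
      intro j
      rw [hΦapp]
      exact hkill _ _ _ (min_le_left _ _) ((mem_tau _ _).mp (v j).2)
    have h2 : ∀ j : ℤ, (X : Polynomial F) ^ (b j) • (Φ v) j = 0 := by
      intro j
      rw [hΦapp]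
      exact hkill _ _ _ (min_le_right _ _) ((mem_tau _ _).mp (v j).2)
    refine DFunLike.ext _ _ fun j => ?_
    rw [hD, h1 j, h2 (j + 1), add_zero]
    rfl
  let Φ' : (⨁ i : ℤ, tau F (min (a i) (b i))) →ₗ[Polynomial F] LinearMap.ker D :=
    Φ.codRestrict (LinearMap.ker D) hΦker
  have hbij : Function.Bijective Φ' := by
    constructor
    · intro u v huv
      have h2 : Φ u = Φ v := congrArg Subtype.val huv
      refine DFunLike.ext _ _ fun j => ?_
      have h3 := DFunLike.congr_fun h2 j
      rw [hΦapp, hΦapp] at h3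
      exact Subtype.ext h3
    · rintro ⟨x, hx⟩
      have hxmem : ∀ j : ℤ, x j ∈ tau F (min (a j) (b j)) := by
        intro j
        rw [mem_tau]
        rcases min_cases (a j) (b j) with ⟨hmin, _⟩ | ⟨hmin, _⟩
        · rw [hmin]; exact (key x (LinearMap.mem_ker.mp hx) j).1
        · rw [hmin]; exact (key x (LinearMap.mem_ker.mp hx) j).2
      refine ⟨DFinsupp.mk x.support (fun i => ⟨x i.1, hxmem i.1⟩), ?_⟩
      apply Subtype.ext
      show Φ _ = x
      refine DFunLike.ext _ _ fun j => ?_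
      rw [hΦapp]
      by_cases hj : j ∈ x.support
      · rw [DFinsupp.mk_apply, dif_pos hj]
      · rw [DFinsupp.mk_apply, dif_neg hj]
        exact (DFinsupp.notMem_support_iff.mp hj).symm
  exact ⟨(LinearEquiv.ofBijective Φ' hbij).symm⟩
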